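/- Let N ≥ 2 be even and let 0 ≤ s ≤ N/2 − 1. For a set partition π of {1,…,N} into blocks of even cardinalities, let |π| be its number of blocks and w(π) = ∏_{B ∈ π}(|B|−1)!. Then Σ_π (−1)^{|π|} · C(|π|−1, s) · w(π) = (−1)^{s+1} (N−1)!! · e_{N/2−1−s}(1, 3, 5, …, N−3), where the sum is over all set partitions of {1,…,N} with all blocks of even size, C(·,·) is the binomial coefficient, and e_j denotes the elementary symmetric polynomial of degree j evaluated at the listed odd numbers. -/

import Mathlib

/-- A finset of finsets is a partition of `Fin N` with all blocks of even
(nonzero) cardinality. -/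
def IsEvenPartition (N : ℕ) (P : Finset (Finset (Fin N))) : Prop :=
  (∀ B ∈ P, B.Nonempty ∧ Even B.card) ∧
  (∀ B ∈ P, ∀ C ∈ P, B ≠ C → Disjoint B C) ∧
  P.sup id = Finset.univ

open Polynomial Finset



noncomputable def Fpoly (n : ℕ) : Polynomial ℤ := ∏ r ∈ range n, (X + ((2 * r : ℕ) : Polynomial ℤ))

noncomputable def Gpoly (m : ℕ) : Polynomial ℤ :=
  if Even m then ((Nat.doubleFactorial (m - 1) : ℕ) : Polynomial ℤ) * Fpoly (m / 2) else 0

lemma coef_succ (n i : ℕ) (h : i + 1 ≤ n) :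
    (2*n+1).choose (2*i+3) * (2*i+3).factorial
      = 2*n*(2*n+1) * ((2*n-1).choose (2*i+1) * (2*i+1).factorial) := by
  have h1 : 2*i+3 ≤ 2*n+1 := by omega
  have h2 : 2*i+1 ≤ 2*n-1 := by omega
  have e1 := Nat.choose_mul_factorial_mul_factorial h1
  have e2 := Nat.choose_mul_factorial_mul_factorial h2
  have h3 : 2*n+1 - (2*i+3) = 2*n-2*i-2 := by omega
  have h4 : 2*n-1 - (2*i+1) = 2*n-2*i-2 := by omega
  rw [h3] at e1; rw [h4] at e2
  have h5 : (2*n+1).factorial = 2*n*(2*n+1) * (2*n-1).factorial := by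
    obtain ⟨m, hm⟩ : ∃ m, n = m + 1 := ⟨n-1, by omega⟩
    subst hm
    rw [show 2*(m+1)+1 = (2*m+1)+1+1 by ring, show 2*(m+1)-1 = 2*m+1 by omega,
      Nat.factorial_succ, Nat.factorial_succ]
    ring
  apply Nat.eq_of_mul_eq_mul_right (Nat.factorial_pos (2*n-2*i-2))
  rw [e1, h5]
  conv_rhs => rw [mul_assoc, e2]

lemma F_rec (n : ℕ) (hn : 1 ≤ n) :
    ((Nat.doubleFactorial (2*n-1) : ℕ) : Polynomial ℤ) * Fpoly n
      = X * ∑ i ∈ range n,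
          (((2*n-1).choose (2*i+1) * (2*i+1).factorial
             * Nat.doubleFactorial (2*(n-1-i)-1) : ℕ) : Polynomial ℤ) * Fpoly (n-1-i) := by
  induction n, hn using Nat.le_induction with
  | base => simp [Fpoly, Nat.doubleFactorial]
  | succ n hn IH =>
    have hdf : Nat.doubleFactorial (2*(n+1)-1) = (2*n+1) * Nat.doubleFactorial (2*n-1) := by
      rw [show 2*(n+1)-1 = (2*n-1)+2 by omega, Nat.doubleFactorial_add_two,
        show 2*n-1+2 = 2*n+1 by omega]
    have hF : Fpoly (n+1) = Fpoly n * (X + ((2*n : ℕ) : Polynomial ℤ)) := by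
      rw [Fpoly, prod_range_succ]; rfl
    rw [hdf, hF]
    rw [Finset.sum_range_succ']
    -- t 0 term
    have ht0 : (((2*(n+1)-1).choose (2*0+1) * (2*0+1).factorial
          * Nat.doubleFactorial (2*((n+1)-1-0)-1) : ℕ) : Polynomial ℤ) * Fpoly ((n+1)-1-0)
        = (((2*n+1) * Nat.doubleFactorial (2*n-1) : ℕ) : Polynomial ℤ) * Fpoly n := by
      rw [show 2*(n+1)-1 = 2*n+1 by omega, show (n+1)-1-0 = n by omega,
        show 2*0+1 = 1 by ring, Nat.choose_one_right, Nat.factorial_one, mul_one]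
    rw [ht0]
    have hterm : ∀ i ∈ range n,
        (((2*(n+1)-1).choose (2*(i+1)+1) * (2*(i+1)+1).factorial
            * Nat.doubleFactorial (2*((n+1)-1-(i+1))-1) : ℕ) : Polynomial ℤ) * Fpoly ((n+1)-1-(i+1))
        = ((2*n*(2*n+1) : ℕ) : Polynomial ℤ)
            * ((((2*n-1).choose (2*i+1) * (2*i+1).factorial
                 * Nat.doubleFactorial (2*(n-1-i)-1) : ℕ) : Polynomial ℤ) * Fpoly (n-1-i)) := by
      intro i hi
      rw [mem_range] at hi
      rw [show 2*(n+1)-1 = 2*n+1 by omega, show 2*(i+1)+1 = 2*i+3 by ring,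
        show (n+1)-1-(i+1) = n-1-i by omega]
      rw [show (2*n+1).choose (2*i+3) * (2*i+3).factorial * Nat.doubleFactorial (2*(n-1-i)-1)
            = 2*n*(2*n+1) * ((2*n-1).choose (2*i+1) * (2*i+1).factorial
               * Nat.doubleFactorial (2*(n-1-i)-1)) by rw [← mul_assoc, coef_succ n i hi]]
      push_cast; try ring
    rw [Finset.sum_congr rfl hterm, ← Finset.mul_sum]
    push_cast at IH ⊢
    linear_combination (2*(n : Polynomial ℤ))*(2*(n : Polynomial ℤ)+1) * IH


variable {N : ℕ}

open Classical in
noncomputable def parts (N : ℕ) (s : Finset (Fin N)) : Finset (Finset (Finset (Fin N))) :=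
  Finset.univ.filter (fun P => (∀ B ∈ P, B.Nonempty ∧ Even B.card) ∧
    (∀ B ∈ P, ∀ C ∈ P, B ≠ C → Disjoint B C) ∧ P.sup id = s)

lemma mem_parts {s : Finset (Fin N)} {P : Finset (Finset (Fin N))} :
    P ∈ parts N s ↔ (∀ B ∈ P, B.Nonempty ∧ Even B.card) ∧
      (∀ B ∈ P, ∀ C ∈ P, B ≠ C → Disjoint B C) ∧ P.sup id = s := by
  classical
  rw [parts, Finset.mem_filter]
  simp only [Finset.mem_univ, true_and]

noncomputable def q (N : ℕ) (s : Finset (Fin N)) : Polynomial ℤ :=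
  ∑ P ∈ parts N s, ((∏ B ∈ P, (B.card - 1).factorial : ℕ) : Polynomial ℤ) * X ^ P.card

/-- the block of the partition `P` containing `a` -/
def blockOf (a : Fin N) (P : Finset (Finset (Fin N))) : Finset (Fin N) :=
  (P.filter (fun B => a ∈ B)).sup id

lemma blockOf_eq {a : Fin N} {P : Finset (Finset (Fin N))} {B : Finset (Fin N)}
    (hB : B ∈ P) (haB : a ∈ B)
    (hdisj : ∀ B ∈ P, ∀ C ∈ P, B ≠ C → Disjoint B C) :
    blockOf a P = B := by
  have hf : P.filter (fun B => a ∈ B) = {B} := by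
    ext C
    simp only [Finset.mem_filter, Finset.mem_singleton]
    constructor
    · rintro ⟨hC, haC⟩
      by_contra hne
      exact (Finset.disjoint_left.1 (hdisj C hC B hB hne)) haC haB
    · rintro rfl; exact ⟨hB, haB⟩
  rw [blockOf, hf, Finset.sup_singleton, id]

lemma exists_block {s : Finset (Fin N)} {P : Finset (Finset (Fin N))}
    (hP : P ∈ parts N s) {a : Fin N} (ha : a ∈ s) :
    ∃ B ∈ P, a ∈ B := by
  obtain ⟨h1, h2, h3⟩ := mem_parts.1 hP
  rw [← h3] at ha
  obtain ⟨B, hB, haB⟩ := Finset.mem_sup.1 ha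
  exact ⟨B, hB, haB⟩

lemma block_subset {s : Finset (Fin N)} {P : Finset (Finset (Fin N))}
    (hP : P ∈ parts N s) {B : Finset (Fin N)} (hB : B ∈ P) : B ⊆ s := by
  obtain ⟨h1, h2, h3⟩ := mem_parts.1 hP
  rw [← h3]
  exact Finset.le_sup (f := id) hB

lemma erase_mem_parts {s : Finset (Fin N)} {P : Finset (Finset (Fin N))}
    (hP : P ∈ parts N s) {B : Finset (Fin N)} (hB : B ∈ P) :
    P.erase B ∈ parts N (s \ B) := by
  obtain ⟨h1, h2, h3⟩ := mem_parts.1 hP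
  rw [mem_parts]
  refine ⟨fun C hC => h1 C (Finset.mem_of_mem_erase hC),
    fun C hC D hD hne => h2 C (Finset.mem_of_mem_erase hC) D (Finset.mem_of_mem_erase hD) hne,
    ?_⟩
  have hdisj : Disjoint B ((P.erase B).sup id) := by
    rw [Finset.disjoint_sup_right]
    intro C hC
    exact h2 B hB C (Finset.mem_of_mem_erase hC) (Ne.symm (Finset.ne_of_mem_erase hC))
  have hunion : B ∪ (P.erase B).sup id = s := by
    rw [← h3]
    conv_rhs => rw [← Finset.insert_erase hB]
    rw [Finset.sup_insert]
    rfl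
  ext x
  simp only [Finset.mem_sdiff]
  constructor
  · intro hx
    refine ⟨?_, fun hxB => Finset.disjoint_left.1 hdisj hxB hx⟩
    rw [← hunion]; exact Finset.mem_union_right _ hx
  · rintro ⟨hxs, hxB⟩
    rw [← hunion] at hxs
    rcases Finset.mem_union.1 hxs with h | h
    · exact absurd h hxB
    · exact h

lemma insert_mem_parts {s : Finset (Fin N)} {B : Finset (Fin N)} (hBs : B ⊆ s)
    {a : Fin N} (haB : a ∈ B) (hBeven : Even B.card)
    {P' : Finset (Finset (Fin N))} (hP' : P' ∈ parts N (s \ B)) :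
    insert B P' ∈ parts N s ∧ B ∉ P' := by
  obtain ⟨h1, h2, h3⟩ := mem_parts.1 hP'
  have hsub : ∀ C ∈ P', C ⊆ s \ B := fun C hC => by
    rw [← h3]; exact Finset.le_sup (f := id) hC
  have hBP' : B ∉ P' := by
    intro hc
    have := hsub B hc haB
    exact (Finset.mem_sdiff.1 this).2 haB
  refine ⟨mem_parts.2 ⟨?_, ?_, ?_⟩, hBP'⟩
  · intro C hC
    rcases Finset.mem_insert.1 hC with rfl | hC
    · exact ⟨⟨a, haB⟩, hBeven⟩
    · exact h1 C hC
  · intro C hC D hD hne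
    have hdisjB : ∀ C ∈ P', Disjoint B C := fun C hC =>
      Finset.disjoint_left.2 fun x hxB hxC => (Finset.mem_sdiff.1 (hsub C hC hxC)).2 hxB
    rcases Finset.mem_insert.1 hC with h1 | h1
    · rcases Finset.mem_insert.1 hD with hD2 | hD2
      · exact absurd (h1.trans hD2.symm) hne
      · subst h1; exact hdisjB D hD2
    · rcases Finset.mem_insert.1 hD with hD2 | hD2
      · subst hD2; exact (hdisjB C h1).symm
      · exact h2 C h1 D hD2 hne
  · rw [Finset.sup_insert, h3]
    show B ∪ (s \ B) = s
    rw [Finset.union_sdiff_of_subset hBs]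

open Classical in
lemma q_rec (N : ℕ) (s : Finset (Fin N)) {a : Fin N} (ha : a ∈ s) :
    q N s = ∑ B ∈ s.powerset.filter (fun B => a ∈ B ∧ Even B.card),
      (((B.card - 1).factorial : ℕ) : Polynomial ℤ) * X * q N (s \ B) := by
  simp only [q, Finset.mul_sum]
  rw [Finset.sum_sigma']
  refine (Finset.sum_nbij' (fun P => (⟨blockOf a P, P.erase (blockOf a P)⟩ :
      (_ : Finset (Fin N)) × Finset (Finset (Fin N))))
    (fun p => insert p.1 p.2) ?_ ?_ ?_ ?_ ?_)
  · -- maps to sigma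
    intro P hP
    obtain ⟨B, hB, haB⟩ := exists_block hP ha
    have hbo := blockOf_eq hB haB (mem_parts.1 hP).2.1
    rw [Finset.mem_sigma, Finset.mem_filter, Finset.mem_powerset]
    dsimp only
    rw [hbo]
    exact ⟨⟨block_subset hP hB, haB, ((mem_parts.1 hP).1 B hB).2⟩, erase_mem_parts hP hB⟩
  · -- maps back
    rintro ⟨B, P'⟩ hp
    rw [Finset.mem_sigma, Finset.mem_filter, Finset.mem_powerset] at hp
    obtain ⟨⟨hBs, haB, hBeven⟩, hP'⟩ := hp
    exact (insert_mem_parts hBs haB hBeven hP').1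
  · -- left inverse
    intro P hP
    obtain ⟨B, hB, haB⟩ := exists_block hP ha
    have hbo := blockOf_eq hB haB (mem_parts.1 hP).2.1
    dsimp only
    rw [hbo]
    exact Finset.insert_erase hB
  · -- right inverse
    rintro ⟨B, P'⟩ hp
    rw [Finset.mem_sigma, Finset.mem_filter, Finset.mem_powerset] at hp
    obtain ⟨⟨hBs, haB, hBeven⟩, hP'⟩ := hp
    obtain ⟨hins, hBP'⟩ := insert_mem_parts hBs haB hBeven hP'
    have hbo : blockOf a (insert B P') = B :=
      blockOf_eq (Finset.mem_insert_self B P') haB (mem_parts.1 hins).2.1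
    dsimp only
    rw [hbo, Finset.erase_insert hBP']
  · -- values
    intro P hP
    obtain ⟨B, hB, haB⟩ := exists_block hP ha
    have hbo := blockOf_eq hB haB (mem_parts.1 hP).2.1
    have hBne : (blockOf a P) ∉ P.erase (blockOf a P) := Finset.notMem_erase _ _
    dsimp only
    conv_lhs => rw [← Finset.insert_erase (hbo ▸ hB : blockOf a P ∈ P)]
    rw [Finset.prod_insert hBne, Finset.card_insert_of_notMem hBne]
    push_cast
    ring

open Classical in
lemma G_rec (m : ℕ) (hm : 1 ≤ m) :
    Gpoly m = X * ∑ k ∈ Icc 1 m,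
      (if Even k then
        (((m-1).choose (k-1) * (k-1).factorial : ℕ) : Polynomial ℤ) * Gpoly (m-k) else 0) := by
  by_cases hEv : Even m
  · obtain ⟨n, hn⟩ : ∃ n, m = 2*n := by obtain ⟨r, hr⟩ := hEv; exact ⟨r, by omega⟩
    subst hn
    have hn1 : 1 ≤ n := by omega
    have hG : Gpoly (2*n) = ((Nat.doubleFactorial (2*n-1) : ℕ) : Polynomial ℤ) * Fpoly n := by
      have h2 : Even (2*n) := even_two_mul n
      simp only [Gpoly, h2, if_true, Nat.mul_div_cancel_left n (by norm_num : 0 < 2)]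
    rw [hG, F_rec n hn1]
    congr 1
    rw [← Finset.sum_filter]
    refine Finset.sum_nbij' (fun i => 2*i+2) (fun k => k/2 - 1) ?_ ?_ ?_ ?_ ?_
    · intro i hi
      rw [mem_range] at hi
      simp only [mem_filter, mem_Icc]
      exact ⟨⟨by omega, by omega⟩, ⟨i+1, by ring⟩⟩
    · intro k hk
      simp only [mem_filter, mem_Icc] at hk
      obtain ⟨⟨h1, h2⟩, h3⟩ := hk
      rw [Nat.even_iff] at h3
      rw [mem_range]; omega
    · intro i _; omega
    · intro k hk
      simp only [mem_filter, mem_Icc] at hk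
      obtain ⟨⟨h1, h2⟩, h3⟩ := hk
      rw [Nat.even_iff] at h3
      omega
    · intro i hi
      rw [mem_range] at hi
      have h1 : 2*n - (2*i+2) = 2*(n-1-i) := by omega
      have h2 : Even (2*(n-1-i)) := ⟨n-1-i, by ring⟩
      have h3 : (2*(n-1-i))/2 = n-1-i := Nat.mul_div_cancel_left _ (by norm_num)
      rw [h1]
      simp only [Gpoly, h2, if_true, h3, show 2*i+2-1 = 2*i+1 by omega]
      push_cast
      ring
  · rw [Gpoly, if_neg hEv]
    symm
    rw [mul_eq_zero]
    right
    apply Finset.sum_eq_zero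
    intro k hk
    rw [mem_Icc] at hk
    by_cases hk2 : Even k
    · have hodd : ¬ Even (m - k) := by
        rw [Nat.even_iff] at hk2 ⊢; rw [Nat.even_iff] at hEv; omega
      rw [if_pos hk2]
      simp only [Gpoly, hodd, if_false, mul_zero]
    · rw [if_neg hk2]


section
variable {α : Type*} [DecidableEq α]

lemma card_powersetCard_mem (s : Finset α) {a : α} (ha : a ∈ s) {k : ℕ} (hk : 1 ≤ k) :
    ((s.powersetCard k).filter (fun B => a ∈ B)).card = (s.card - 1).choose (k - 1) := by
  have : ((s.powersetCard k).filter (fun B => a ∈ B)).card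
      = ((s.erase a).powersetCard (k-1)).card := by
    refine Finset.card_nbij' (fun B => B.erase a) (fun C => insert a C) ?_ ?_ ?_ ?_
    · intro B hB
      simp only [Finset.mem_coe, Finset.mem_filter, Finset.mem_powersetCard] at hB
      obtain ⟨⟨hBs, hBk⟩, haB⟩ := hB
      rw [Finset.mem_coe, Finset.mem_powersetCard]
      exact ⟨Finset.erase_subset_erase a hBs, by rw [Finset.card_erase_of_mem haB, hBk]⟩
    · intro C hC
      rw [Finset.mem_coe, Finset.mem_powersetCard] at hC
      obtain ⟨hCs, hCk⟩ := hC
      have haC : a ∉ C := fun hc => (Finset.mem_erase.1 (hCs hc)).1 rfl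
      simp only [Finset.mem_coe, Finset.mem_filter, Finset.mem_powersetCard]
      refine ⟨⟨?_, ?_⟩, Finset.mem_insert_self a C⟩
      · intro x hx
        rcases Finset.mem_insert.1 hx with rfl | hx
        · exact ha
        · exact Finset.mem_of_mem_erase (hCs hx)
      · rw [Finset.card_insert_of_notMem haC, hCk]; omega
    · intro B hB
      simp only [Finset.mem_coe, Finset.mem_filter] at hB
      exact Finset.insert_erase hB.2
    · intro C hC
      rw [Finset.mem_coe, Finset.mem_powersetCard] at hC
      have haC : a ∉ C := fun hc => (Finset.mem_erase.1 (hC.1 hc)).1 rfl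
      exact Finset.erase_insert haC
  rw [this, Finset.card_powersetCard, Finset.card_erase_of_mem ha]
end

open Classical in
lemma q_eq (N : ℕ) (s : Finset (Fin N)) : q N s = Gpoly s.card := by
  induction s using Finset.strongInduction with
  | _ s IH =>
  rcases s.eq_empty_or_nonempty with rfl | ⟨a, ha⟩
  · have hparts : parts N (∅ : Finset (Fin N)) = {∅} := by
      ext P
      rw [mem_parts, Finset.mem_singleton]
      constructor
      · rintro ⟨h1, h2, h3⟩
        rw [Finset.eq_empty_iff_forall_notMem]
        intro B hB
        have hle : B ⊆ P.sup id := Finset.le_sup (f := id) hB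
        rw [h3] at hle
        obtain ⟨x, hx⟩ := (h1 B hB).1
        exact absurd (hle hx) (Finset.notMem_empty x)
      · rintro rfl
        exact ⟨by simp, by simp, by simp⟩
    rw [q, hparts]
    simp [Gpoly, Fpoly]
  · rw [q_rec N s ha]
    have hstep : ∀ B ∈ s.powerset.filter (fun B => a ∈ B ∧ Even B.card),
        (((B.card - 1).factorial : ℕ) : Polynomial ℤ) * X * q N (s \ B)
          = (((B.card - 1).factorial : ℕ) : Polynomial ℤ) * X * Gpoly (s.card - B.card) := by
      intro B hB
      simp only [Finset.mem_filter, Finset.mem_powerset] at hB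
      obtain ⟨hBs, haB, _⟩ := hB
      have hss : s \ B ⊂ s := by
        apply Finset.sdiff_ssubset hBs ⟨a, haB⟩
      rw [IH _ hss, Finset.card_sdiff_of_subset hBs]
    rw [Finset.sum_congr rfl hstep]
    -- group by cardinality
    have hmaps : ∀ B ∈ s.powerset.filter (fun B => a ∈ B ∧ Even B.card),
        B.card ∈ Icc 1 s.card := by
      intro B hB
      simp only [Finset.mem_filter, Finset.mem_powerset] at hB
      rw [mem_Icc]
      exact ⟨Finset.card_pos.2 ⟨a, hB.2.1⟩, Finset.card_le_card hB.1⟩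
    rw [← Finset.sum_fiberwise_of_maps_to hmaps]
    rw [G_rec s.card (Finset.card_pos.2 ⟨a, ha⟩), Finset.mul_sum]
    refine Finset.sum_congr rfl ?_
    intro k hk
    rw [mem_Icc] at hk
    -- inner sum is constant on the fiber
    have hconst : ∀ B ∈ (s.powerset.filter (fun B => a ∈ B ∧ Even B.card)).filter
        (fun B => B.card = k),
        (((B.card - 1).factorial : ℕ) : Polynomial ℤ) * X * Gpoly (s.card - B.card)
          = (((k - 1).factorial : ℕ) : Polynomial ℤ) * X * Gpoly (s.card - k) := by
      intro B hB
      rw [Finset.mem_filter] at hB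
      rw [hB.2]
    rw [Finset.sum_congr rfl hconst, Finset.sum_const]
    have hfiber : ((s.powerset.filter (fun B => a ∈ B ∧ Even B.card)).filter
        (fun B => B.card = k)).card = if Even k then (s.card - 1).choose (k-1) else 0 := by
      by_cases hEv : Even k
      · rw [if_pos hEv, ← card_powersetCard_mem s ha hk.1]
        congr 1
        ext B
        simp only [Finset.mem_filter, Finset.mem_powerset, Finset.mem_powersetCard]
        constructor
        · rintro ⟨⟨h1, h2, h3⟩, h4⟩; exact ⟨⟨h1, h4⟩, h2⟩
        · rintro ⟨⟨h1, h4⟩, h2⟩; exact ⟨⟨h1, h2, h4 ▸ hEv⟩, h4⟩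
      · rw [if_neg hEv]
        rw [Finset.card_eq_zero, Finset.filter_eq_empty_iff]
        intro B hB
        simp only [Finset.mem_filter, Finset.mem_powerset] at hB
        intro hc
        exact hEv (hc ▸ hB.2.2)
    rw [hfiber]
    by_cases hEv : Even k
    · rw [if_pos hEv, if_pos hEv]
      rw [nsmul_eq_mul]
      push_cast
      ring
    · rw [if_neg hEv, if_neg hEv, zero_smul, mul_zero]

lemma prod_neg' {ι : Type*} {R : Type*} [CommRing R] (t : Finset ι) (f : ι → R) :
    ∏ i ∈ t, -f i = (-1)^t.card * ∏ i ∈ t, f i := by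
  rw [Finset.prod_congr rfl (fun i _ => (neg_eq_neg_one_mul (f i))),
    Finset.prod_mul_distrib, Finset.prod_const]

lemma reindex_sum (m s : ℕ) :
    ∑ S ∈ (Finset.range m).powersetCard (m - s), ∏ i ∈ S, ((2*i+1 : ℤ)) =
    ∑ S ∈ (Finset.Icc 1 m).powersetCard (m - s), ∏ r ∈ S, ((2 * r - 1 : ℕ) : ℤ) := by
  refine Finset.sum_nbij' (fun S => S.image (· + 1)) (fun S => S.image (· - 1)) ?_ ?_ ?_ ?_ ?_
  · intro S hS
    rw [Finset.mem_powersetCard] at hS ⊢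
    constructor
    · intro x hx
      obtain ⟨i, hi, rfl⟩ := Finset.mem_image.1 hx
      have := hS.1 hi
      rw [Finset.mem_range] at this
      rw [Finset.mem_Icc]; omega
    · rw [Finset.card_image_of_injective _ (add_left_injective 1), hS.2]
  · intro S hS
    rw [Finset.mem_powersetCard] at hS ⊢
    constructor
    · intro x hx
      obtain ⟨r, hr, rfl⟩ := Finset.mem_image.1 hx
      have := hS.1 hr
      rw [Finset.mem_Icc] at this
      rw [Finset.mem_range]; omega
    · rw [Finset.card_image_of_injOn, hS.2]
      intro x hx y hy hxy
      have hxy' : x - 1 = y - 1 := hxy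
      have hx1 := Finset.mem_Icc.1 (hS.1 hx)
      have hy1 := Finset.mem_Icc.1 (hS.1 hy)
      omega
  · intro S hS
    rw [Finset.mem_powersetCard] at hS
    rw [Finset.image_image]
    ext x
    simp only [Finset.mem_image, Function.comp]
    constructor
    · rintro ⟨i, hi, rfl⟩
      simpa using hi
    · intro hx
      exact ⟨x, hx, rfl⟩
  · intro S hS
    rw [Finset.mem_powersetCard] at hS
    rw [Finset.image_image]
    ext x
    simp only [Finset.mem_image, Function.comp]
    constructor
    · rintro ⟨r, hr, rfl⟩
      have := Finset.mem_Icc.1 (hS.1 hr)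
      have h1 : r - 1 + 1 = r := by omega
      rw [h1]; exact hr
    · intro hx
      have := Finset.mem_Icc.1 (hS.1 hx)
      exact ⟨x, hx, by omega⟩
  · intro S hS
    rw [Finset.mem_powersetCard] at hS
    rw [Finset.prod_image (by intro x _ y _ h; simp only at h; omega)]
    apply Finset.prod_congr rfl
    intro i hi
    have h1 : 2 * (i + 1) - 1 = 2 * i + 1 := by omega
    rw [h1]
    push_cast
    ring

open Classical in
/-- For even `N ≥ 2` and `0 ≤ s ≤ N/2 − 1`, the sum over all set partitions `π`
of `{1,…,N}` into blocks of even cardinality of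
`(−1)^{|π|} C(|π|−1, s) ∏_{B∈π}(|B|−1)!` equals
`(−1)^{s+1} (N−1)!! e_{N/2−1−s}(1,3,…,N−3)`, where the elementary symmetric
polynomial is expressed as a sum over subsets of `{1,…,N/2−1}` of size
`N/2−1−s` of the products `∏_{r∈S}(2r−1)`. -/
theorem stmt_4 (N s : ℕ) (hN : 2 ≤ N) (hNe : Even N) (hs : s ≤ N / 2 - 1) :
    ∑ P ∈ Finset.univ.filter (fun P : Finset (Finset (Fin N)) => IsEvenPartition N P),
        (-1 : ℤ) ^ P.card * (Nat.choose (P.card - 1) s : ℤ) *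
          ∏ B ∈ P, (Nat.factorial (B.card - 1) : ℤ) =
      (-1 : ℤ) ^ (s + 1) * (Nat.doubleFactorial (N - 1) : ℤ) *
        ∑ S ∈ (Finset.Icc 1 (N / 2 - 1)).powersetCard (N / 2 - 1 - s),
          ∏ r ∈ S, ((2 * r - 1 : ℕ) : ℤ) := by
  classical
  have hset : Finset.univ.filter (fun P : Finset (Finset (Fin N)) => IsEvenPartition N P)
      = parts N Finset.univ := by
    rw [parts]
    apply Finset.filter_congr
    intro P _
    exact Iff.rfl
  rw [hset]
  set n := N / 2 with hn
  have hN2 : N = 2 * n := by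
    obtain ⟨r, hr⟩ := hNe; omega
  obtain ⟨m, hm⟩ : ∃ m, n = m + 1 := ⟨n - 1, by omega⟩
  have hsm : s ≤ m := by omega
  -- the generating polynomial
  have hq : q N Finset.univ
      = ((Nat.doubleFactorial (N - 1) : ℕ) : Polynomial ℤ) * Fpoly n := by
    rw [q_eq, Finset.card_univ, Fintype.card_fin]
    simp only [Gpoly, hNe, if_true]
    rw [← hn]
  have hFn : Fpoly n = X * ∏ i ∈ range m, (X + ((2*i+2 : ℕ) : Polynomial ℤ)) := by
    rw [hm, Fpoly, Finset.prod_range_succ']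
    rw [show ((2*0 : ℕ) : Polynomial ℤ) = 0 by norm_num, add_zero, mul_comm]
    congr 1
  -- nonemptiness of partitions
  have hPne : ∀ P ∈ parts N Finset.univ, 1 ≤ P.card := by
    intro P hP
    obtain ⟨h1, h2, h3⟩ := mem_parts.1 hP
    rcases P.eq_empty_or_nonempty with rfl | hne
    · exfalso
      have : (Finset.univ : Finset (Fin N)) = ∅ := by
        rw [← h3]; simp
      have h0 : (⟨0, by omega⟩ : Fin N) ∈ (Finset.univ : Finset (Fin N)) :=
        Finset.mem_univ _
      rw [this] at h0
      exact Finset.notMem_empty _ h0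
    · exact Finset.card_pos.2 hne
  -- the key polynomial identity
  have hW : ∑ P ∈ parts N Finset.univ,
        Polynomial.C ((-1:ℤ)^P.card * (∏ B ∈ P, ((B.card - 1).factorial : ℤ)))
          * (X+1)^(P.card - 1)
      = -(((Nat.doubleFactorial (N - 1) : ℕ) : Polynomial ℤ)
          * ∏ i ∈ range m, (((2*i+1 : ℕ) : Polynomial ℤ) - X)) := by
    have hc : ((X : Polynomial ℤ) + 1) ≠ 0 := by
      intro h
      have := congrArg (fun p => Polynomial.coeff p 0) h
      simp at this
    apply mul_left_cancel₀ hc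
    have hcomp : (q N Finset.univ).comp (-(X+1))
        = -(X+1) * (((Nat.doubleFactorial (N - 1) : ℕ) : Polynomial ℤ)
            * ∏ i ∈ range m, (((2*i+1 : ℕ) : Polynomial ℤ) - X)) := by
      rw [hq, hFn]
      rw [mul_comp, mul_comp, natCast_comp, X_comp, Polynomial.prod_comp]
      have : ∀ i ∈ range m, ((X + ((2*i+2 : ℕ) : Polynomial ℤ)).comp (-(X+1)))
          = (((2*i+1 : ℕ) : Polynomial ℤ) - X) := by
        intro i _
        rw [add_comp, X_comp, natCast_comp]
        push_cast
        ring
      rw [Finset.prod_congr rfl this]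
      ring
    rw [show ((X : Polynomial ℤ)+1) * -(((Nat.doubleFactorial (N - 1) : ℕ) : Polynomial ℤ)
          * ∏ i ∈ range m, (((2*i+1 : ℕ) : Polynomial ℤ) - X))
        = -(X+1) * (((Nat.doubleFactorial (N - 1) : ℕ) : Polynomial ℤ)
          * ∏ i ∈ range m, (((2*i+1 : ℕ) : Polynomial ℤ) - X)) by ring, ← hcomp]
    rw [q, Polynomial.sum_comp, Finset.mul_sum]
    apply Finset.sum_congr rfl
    intro P hP
    obtain ⟨c, hc⟩ : ∃ c, P.card = c + 1 := ⟨P.card - 1, by have := hPne P hP; omega⟩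
    rw [mul_comp, natCast_comp, X_pow_comp, hc, neg_pow ((X : Polynomial ℤ)+1) (c+1)]
    simp only [Nat.add_sub_cancel, map_mul, map_pow, map_neg, map_one,
      ← Polynomial.C_eq_natCast]
    push_cast
    ring
  -- extract coefficients
  have hLHS : ∑ P ∈ parts N Finset.univ,
        (-1 : ℤ) ^ P.card * (Nat.choose (P.card - 1) s : ℤ) *
          ∏ B ∈ P, (Nat.factorial (B.card - 1) : ℤ)
      = (∑ P ∈ parts N Finset.univ,
          Polynomial.C ((-1:ℤ)^P.card * (∏ B ∈ P, ((B.card - 1).factorial : ℤ)))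
            * (X+1)^(P.card - 1)).coeff s := by
    rw [Polynomial.finset_sum_coeff]
    apply Finset.sum_congr rfl
    intro P hP
    rw [Polynomial.coeff_C_mul, Polynomial.coeff_X_add_one_pow]
    ring
  rw [hLHS, hW]
  -- compute the coefficient of the product
  have hprod : ∏ i ∈ range m, (((2*i+1 : ℕ) : Polynomial ℤ) - X)
      = Polynomial.C ((-1 : ℤ)^m) * ∏ i ∈ range m, (X + Polynomial.C (-(2*(i:ℤ)+1))) := by
    have h1 : ∀ i ∈ range m, (((2*i+1 : ℕ) : Polynomial ℤ) - X)
        = -(X + Polynomial.C (-(2*(i:ℤ)+1))) := by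
      intro i _
      rw [map_neg, ← Polynomial.C_eq_natCast]
      push_cast
      ring
    rw [Finset.prod_congr rfl h1, prod_neg', Finset.card_range, map_pow, map_neg, map_one]
  have hcoeff : (∏ i ∈ range m, (X + Polynomial.C (-(2*(i:ℤ)+1)))).coeff s
      = (-1 : ℤ)^(m - s) * ∑ S ∈ (Finset.range m).powersetCard (m - s), ∏ i ∈ S, ((2*i+1 : ℤ)) := by
    have hcard : s ≤ (Finset.range m).card := by rw [Finset.card_range]; exact hsm
    rw [Finset.prod_X_add_C_coeff (Finset.range m) (fun i => (-(2*(i:ℤ)+1))) hcard,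
      Finset.card_range, Finset.mul_sum]
    apply Finset.sum_congr rfl
    intro S hS
    rw [Finset.mem_powersetCard] at hS
    have : ∀ i ∈ S, (-(2*(i:ℤ)+1)) = -((2*i+1 : ℤ)) := by intro i _; ring
    rw [Finset.prod_congr rfl this, prod_neg', hS.2]
  have hcN : ((Nat.doubleFactorial (N - 1) : ℕ) : Polynomial ℤ)
      = Polynomial.C ((Nat.doubleFactorial (N - 1) : ℤ)) := by
    rw [Polynomial.C_eq_natCast]
  rw [hprod, hcN, Polynomial.coeff_neg, ← mul_assoc, ← map_mul, Polynomial.coeff_C_mul, hcoeff]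
  rw [show n - 1 = m by omega]
  rw [← reindex_sum m s]
  have hsign : (-1 : ℤ)^m * (-1 : ℤ)^(m-s) = (-1 : ℤ)^s := by
    rw [← pow_add, show m + (m - s) = 2*(m-s) + s by omega, pow_add, pow_mul]
    norm_num
  have hsign2 : (-1 : ℤ)^(s+1) = -((-1:ℤ)^s) := by rw [pow_succ]; ring
  rw [hsign2]
  linear_combination (- Nat.doubleFactorial (N-1) *
    ∑ S ∈ (Finset.range m).powersetCard (m - s), ∏ i ∈ S, ((2*i+1 : ℤ))) * hsign
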